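/- Let Z₁, P, Q, A ∈ ℝ⁴ and let y, w ∈ ℝ with y ≠ 0, and set B := −Z₁ + y(P + wQ). If ⟨A B P Q⟩ ≠ 0 and ⟨A B Z₁ Q⟩ ≠ 0, then y = ⟨A B Z₁ Q⟩ / ⟨A B P Q⟩ and w = −⟨A B Z₁ P⟩ / ⟨A B Z₁ Q⟩. -/

import Mathlib

noncomputable def det4 (x y z w : Fin 4 → ℝ) : ℝ := Matrix.det (Matrix.of ![x, y, z, w])

set_option maxHeartbeats 1000000 in
lemma det4_expand (a b c d : Fin 4 → ℝ) : det4 a b c d =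
    a 0 * (b 1 * (c 2 * d 3 - c 3 * d 2) - b 2 * (c 1 * d 3 - c 3 * d 1) + b 3 * (c 1 * d 2 - c 2 * d 1))
  - a 1 * (b 0 * (c 2 * d 3 - c 3 * d 2) - b 2 * (c 0 * d 3 - c 3 * d 0) + b 3 * (c 0 * d 2 - c 2 * d 0))
  + a 2 * (b 0 * (c 1 * d 3 - c 3 * d 1) - b 1 * (c 0 * d 3 - c 3 * d 0) + b 3 * (c 0 * d 1 - c 1 * d 0))
  - a 3 * (b 0 * (c 1 * d 2 - c 2 * d 1) - b 1 * (c 0 * d 2 - c 2 * d 0) + b 2 * (c 0 * d 1 - c 1 * d 0)) := by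
  simp [det4, Matrix.det_succ_row_zero, Fin.sum_univ_succ, Fin.succAbove]
  ring

theorem kermit_coordinates (Z₁ P Q A : Fin 4 → ℝ) (y w : ℝ) (hy : y ≠ 0)
    (B : Fin 4 → ℝ) (hB : B = -Z₁ + y • (P + w • Q))
    (h1 : det4 A B P Q ≠ 0) (h2 : det4 A B Z₁ Q ≠ 0) :
    y = det4 A B Z₁ Q / det4 A B P Q ∧
    w = -det4 A B Z₁ P / det4 A B Z₁ Q := by
  have hBv : ∀ i, B i = -Z₁ i + y * (P i + w * Q i) := by
    intro i; rw [hB]; simp; ring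
  have e1 : det4 A B Z₁ Q = y * det4 A B P Q := by
    rw [det4_expand, det4_expand, hBv 0, hBv 1, hBv 2, hBv 3]; ring
  have e2 : det4 A B Z₁ P = -(y * w) * det4 A B P Q := by
    rw [det4_expand A B Z₁ P, det4_expand A B P Q, hBv 0, hBv 1, hBv 2, hBv 3]; ring
  constructor
  · rw [e1]; field_simp
  · rw [e2, e1]; field_simp
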